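/- Self-normalized martingale concentration: under the martingale setup with predictable bounds, for every fixed k ≥ 1, every β > 0, and every δ ∈ (0, 1/e], P( |M_k| ≥ √( (U_k²/4 + β)·(2 + log(U_k²/(4β) + 1))·log(1/δ) ) ) ≤ δ. -/

import Mathlib

open Real MeasureTheory

lemma hoeffding_core {p : ℝ} (hp0 : 0 ≤ p) (hp1 : p ≤ 1) (h : ℝ) :
    1 - p + p * exp h ≤ exp (h ^ 2 / 8 + p * h) := by
  set u : ℝ → ℝ := fun x => 1 - p + p * exp x with hu_def
  have hu : ∀ x, 0 < u x := by
    intro x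
    have he := exp_pos x
    rcases eq_or_lt_of_le hp1 with hp | hp
    · simp only [hu_def, ← hp]; nlinarith
    · simp only [hu_def]; nlinarith [mul_nonneg hp0 he.le]
  set g : ℝ → ℝ := fun x => x ^ 2 / 8 + p * x - Real.log (u x) with hg_def
  set d1 : ℝ → ℝ := fun x => x / 4 + p - p * exp x / u x with hd1_def
  have hderiv_u : ∀ x, HasDerivAt u (p * exp x) x := by
    intro x
    exact ((Real.hasDerivAt_exp x).const_mul p).const_add (1 - p)
  have hderiv_g : ∀ x, HasDerivAt g (d1 x) x := by
    intro x
    have h1 : HasDerivAt (fun x : ℝ => x ^ 2 / 8 + p * x) (x / 4 + p) x := by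
      have := ((hasDerivAt_pow 2 x).div_const 8).add ((hasDerivAt_id x).const_mul p)
      exact this.congr_deriv (by ring)
    have h2 : HasDerivAt (fun x => Real.log (u x)) (p * exp x / u x) x :=
      (hderiv_u x).log (hu x).ne'
    exact h1.sub h2
  have hderiv_d1 : ∀ x, HasDerivAt d1 (1 / 4 - p * exp x * (1 - p) / (u x) ^ 2) x := by
    intro x
    have h1 : HasDerivAt (fun x : ℝ => x / 4 + p) (1 / 4) x := by
      simpa using ((hasDerivAt_id x).div_const 4).add_const p
    have h2 : HasDerivAt (fun x => p * exp x / u x)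
        ((p * exp x * u x - p * exp x * (p * exp x)) / (u x) ^ 2) x :=
      ((Real.hasDerivAt_exp x).const_mul p).div (hderiv_u x) (hu x).ne'
    have hnum : p * exp x * u x - p * exp x * (p * exp x) = p * exp x * (1 - p) := by
      have huxe : u x - p * exp x = 1 - p := by simp [hu_def]
      rw [← huxe]; ring
    have := h1.sub h2
    rw [hnum] at this
    exact this
  have hd2_nonneg : ∀ x, 0 ≤ 1 / 4 - p * exp x * (1 - p) / (u x) ^ 2 := by
    intro x
    rw [sub_nonneg, div_le_iff₀ (pow_pos (hu x) 2)]
    have : (u x) ^ 2 = ((1 - p) + p * exp x) ^ 2 := by simp [hu_def]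
    nlinarith [sq_nonneg ((1 - p) - p * exp x)]
  have hd1_mono : Monotone d1 :=
    monotone_of_deriv_nonneg (fun x => (hderiv_d1 x).differentiableAt)
      (fun x => by rw [(hderiv_d1 x).deriv]; exact hd2_nonneg x)
  have hd1_zero : d1 0 = 0 := by simp [hd1_def, hu_def]
  have hg_zero : g 0 = 0 := by simp [hg_def, hu_def]
  have hg_nonneg : ∀ x, 0 ≤ g x := by
    intro x
    rcases le_or_gt 0 x with hx | hx
    · have hmono : MonotoneOn g (Set.Ici 0) := by
        refine monotoneOn_of_deriv_nonneg (convex_Ici 0)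
          (fun y _ => (hderiv_g y).differentiableAt.continuousAt.continuousWithinAt)
          (fun y _ => (hderiv_g y).differentiableAt.differentiableWithinAt) (fun y hy => ?_)
        rw [(hderiv_g y).deriv]
        rw [interior_Ici] at hy
        have := hd1_mono (le_of_lt hy)
        rwa [hd1_zero] at this
      have := hmono (Set.mem_Ici.mpr le_rfl) (Set.mem_Ici.mpr hx) hx
      rwa [hg_zero] at this
    · have hmono : AntitoneOn g (Set.Iic 0) := by
        refine antitoneOn_of_deriv_nonpos (convex_Iic 0)
          (fun y _ => (hderiv_g y).differentiableAt.continuousAt.continuousWithinAt)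
          (fun y _ => (hderiv_g y).differentiableAt.differentiableWithinAt) (fun y hy => ?_)
        rw [(hderiv_g y).deriv]
        rw [interior_Iic] at hy
        have := hd1_mono (le_of_lt hy)
        rwa [hd1_zero] at this
      have := hmono (Set.mem_Iic.mpr hx.le) (Set.mem_Iic.mpr le_rfl) hx.le
      rwa [hg_zero] at this
  have := hg_nonneg h
  have hlog : Real.log (u h) ≤ h ^ 2 / 8 + p * h := by
    simp only [hg_def] at this; linarith
  calc u h = exp (Real.log (u h)) := (exp_log (hu h)).symm
    _ ≤ exp (h ^ 2 / 8 + p * h) := exp_le_exp.mpr hlog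

/-- Scalar Hoeffding lemma. -/
lemma hoeffding_scalar {c d : ℝ} (hc : c ≤ 0) (hd : 0 ≤ d) (hcd : c < d) (t : ℝ) :
    d * exp (t * c) - c * exp (t * d) ≤ (d - c) * exp (t ^ 2 * (d - c) ^ 2 / 8) := by
  have hdc : (0:ℝ) < d - c := sub_pos.mpr hcd
  set p : ℝ := -c / (d - c) with hp_def
  set h : ℝ := t * (d - c) with hh_def
  have hp0 : 0 ≤ p := div_nonneg (neg_nonneg.mpr hc) hdc.le
  have hp1 : p ≤ 1 := by
    rw [hp_def, div_le_one hdc]; linarith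
  have key := hoeffding_core hp0 hp1 h
  have hph : p * h = -(t * c) := by
    rw [hp_def, hh_def]; field_simp
  have hLHS : (1 - p + p * exp h) * ((d - c) * exp (t * c))
      = d * exp (t * c) - c * exp (t * d) := by
    have h1 : (1 - p) * (d - c) = d := by rw [hp_def]; field_simp; ring
    have h2 : p * (d - c) = -c := by rw [hp_def]; field_simp
    have h3 : exp h * exp (t * c) = exp (t * d) := by
      rw [← exp_add, hh_def]; ring_nf
    calc (1 - p + p * exp h) * ((d - c) * exp (t * c))
        = ((1 - p) * (d - c)) * exp (t * c) + (p * (d - c)) * (exp h * exp (t * c)) := by ring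
      _ = d * exp (t * c) - c * exp (t * d) := by rw [h1, h2, h3]; ring
  have hRHS : exp (h ^ 2 / 8 + p * h) * ((d - c) * exp (t * c))
      = (d - c) * exp (t ^ 2 * (d - c) ^ 2 / 8) := by
    rw [mul_comm (d - c) (exp (t * c)), ← mul_assoc, ← exp_add, hph, hh_def]
    ring_nf
  calc d * exp (t * c) - c * exp (t * d)
      = (1 - p + p * exp h) * ((d - c) * exp (t * c)) := hLHS.symm
    _ ≤ exp (h ^ 2 / 8 + p * h) * ((d - c) * exp (t * c)) :=
        mul_le_mul_of_nonneg_right key (by positivity)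
    _ = (d - c) * exp (t ^ 2 * (d - c) ^ 2 / 8) := hRHS

/-- Convexity upper bound for exp on an interval. -/
lemma exp_convex_bound {c d x : ℝ} (hcx : c ≤ x) (hxd : x ≤ d) (hcd : c < d) (t : ℝ) :
    exp (t * x) ≤ ((d - x) * exp (t * c) + (x - c) * exp (t * d)) / (d - c) := by
  have hdc : (0:ℝ) < d - c := sub_pos.mpr hcd
  have hθ0 : 0 ≤ (d - x) / (d - c) := div_nonneg (by linarith) hdc.le
  have hθ0' : 0 ≤ (x - c) / (d - c) := div_nonneg (by linarith) hdc.le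
  have hθ1 : (d - x) / (d - c) + (x - c) / (d - c) = 1 := by field_simp; ring
  have hcomb : (d - x) / (d - c) * (t * c) + (x - c) / (d - c) * (t * d) = t * x := by
    field_simp; ring
  have := convexOn_exp.2 (Set.mem_univ (t * c)) (Set.mem_univ (t * d)) hθ0 hθ0' hθ1
  rw [smul_eq_mul, smul_eq_mul, smul_eq_mul, smul_eq_mul, hcomb] at this
  calc exp (t * x) ≤ (d - x) / (d - c) * exp (t * c) + (x - c) / (d - c) * exp (t * d) := this
    _ = ((d - x) * exp (t * c) + (x - c) * exp (t * d)) / (d - c) := by ring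

/-- If `C ≤ X` a.e., `C` is `𝒢`-measurable and `E[X|𝒢] = 0` a.e., then `C ≤ 0` a.e. -/
lemma ae_nonpos_of_le_condexp_zero {Ω : Type*} {𝒢 : MeasurableSpace Ω}
    {m0 : MeasurableSpace Ω} {μ : Measure Ω}
    [IsFiniteMeasure μ] (h𝒢 : 𝒢 ≤ m0) {X C : Ω → ℝ}
    (hXint : Integrable X μ) (hcond : μ[X|𝒢] =ᵐ[μ] 0)
    (hC : StronglyMeasurable[𝒢] C) (hb : ∀ᵐ ω ∂μ, C ω ≤ X ω) :
    ∀ᵐ ω ∂μ, C ω ≤ 0 := by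
  set S : Set Ω := {ω | 0 < C ω} with hS_def
  have hS : MeasurableSet[𝒢] S := measurableSet_lt measurable_const hC.measurable
  have hS0 : MeasurableSet[m0] S := h𝒢 _ hS
  have hint : ∫ ω in S, X ω ∂μ = 0 := by
    have h1 : ∫ ω in S, X ω ∂μ = ∫ ω in S, (μ[X|𝒢]) ω ∂μ :=
      (setIntegral_condExp h𝒢 hXint hS).symm
    have h2 : ∫ ω in S, (μ[X|𝒢]) ω ∂μ = ∫ ω in S, (0:ℝ) ∂μ := by
      apply setIntegral_congr_ae hS0
      filter_upwards [hcond] with ω h _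
      simpa using h
    rw [h1, h2, setIntegral_const]
    simp
  have hpos : ∀ᵐ ω ∂(μ.restrict S), 0 < X ω := by
    rw [ae_restrict_iff' hS0]
    filter_upwards [hb] with ω h hω
    exact lt_of_lt_of_le hω h
  have hzero : X =ᵐ[μ.restrict S] 0 := by
    rw [← integral_eq_zero_iff_of_nonneg_ae (hpos.mono fun ω h => h.le) hXint.integrableOn]
    exact hint
  have hfalse : ∀ᵐ ω ∂(μ.restrict S), False := by
    filter_upwards [hpos, hzero] with ω h1 h2
    rw [Pi.zero_apply] at h2
    exact absurd h2 (ne_of_gt h1)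
  have hSnull : μ S = 0 := by
    have := hfalse
    rw [ae_iff] at this
    simpa [Measure.restrict_apply_univ] using this
  have : {ω | ¬ C ω ≤ 0} ⊆ S := fun ω h => lt_of_not_ge h
  exact ae_iff.mpr (measure_mono_null this hSnull)

lemma exp_bound_aux {t Δ e : ℝ} (hte : t * e ≤ |t| * Δ) :
    exp (-(t ^ 2 * Δ ^ 2 / 8)) * exp (t * e) ≤ exp 2 := by
  rw [← exp_add]
  apply exp_le_exp.mpr
  nlinarith [sq_nonneg (|t| * Δ - 4), sq_abs t]

/-- One-step supermartingale bound. -/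
lemma step_bound {Ω : Type*} {𝒢 : MeasurableSpace Ω} {m0 : MeasurableSpace Ω}
    (μ : Measure Ω) [IsProbabilityMeasure μ] (h𝒢 : 𝒢 ≤ m0) {X C D A : Ω → ℝ} (t K : ℝ)
    (hK : 0 ≤ K)
    (hXint : Integrable X μ) (hcond : μ[X|𝒢] =ᵐ[μ] 0)
    (hC : StronglyMeasurable[𝒢] C) (hD : StronglyMeasurable[𝒢] D)
    (hCD : ∀ᵐ ω ∂μ, C ω < D ω) (hb : ∀ᵐ ω ∂μ, C ω ≤ X ω ∧ X ω ≤ D ω)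
    (hA : StronglyMeasurable[𝒢] A) (hA0 : ∀ ω, 0 ≤ A ω)
    (hAK : ∀ᵐ ω ∂μ, A ω ≤ K * exp (-(t ^ 2 * (D ω - C ω) ^ 2 / 8))) :
    ∫ ω, A ω * exp (t * X ω) ∂μ ≤ ∫ ω, A ω * exp (t ^ 2 * (D ω - C ω) ^ 2 / 8) ∂μ := by
  have hC0 : ∀ᵐ ω ∂μ, C ω ≤ 0 :=
    ae_nonpos_of_le_condexp_zero h𝒢 hXint hcond hC (hb.mono fun ω h => h.1)
  have hD0 : ∀ᵐ ω ∂μ, 0 ≤ D ω := by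
    have hcond' : μ[fun ω => -X ω|𝒢] =ᵐ[μ] 0 := by
      have := condExp_neg (μ := μ) (m := 𝒢) X
      refine this.trans ?_
      filter_upwards [hcond] with ω h
      simp only [Pi.neg_apply, Pi.zero_apply] at h ⊢
      simp [h]
    have := ae_nonpos_of_le_condexp_zero h𝒢 hXint.neg hcond' hD.neg
      (hb.mono fun ω h => neg_le_neg h.2)
    filter_upwards [this] with ω h
    simpa using h
  -- measurable pieces
  set B1 : Ω → ℝ := fun ω => A ω * exp (t * C ω) / (D ω - C ω) with hB1_def
  set B2 : Ω → ℝ := fun ω => A ω * exp (t * D ω) / (D ω - C ω) with hB2_def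
  have hB1m : StronglyMeasurable[𝒢] B1 :=
    ((hA.measurable.mul (Real.measurable_exp.comp (hC.measurable.const_mul t))).div
      (hD.measurable.sub hC.measurable)).stronglyMeasurable
  have hB2m : StronglyMeasurable[𝒢] B2 :=
    ((hA.measurable.mul (Real.measurable_exp.comp (hD.measurable.const_mul t))).div
      (hD.measurable.sub hC.measurable)).stronglyMeasurable
  have hXm : AEStronglyMeasurable X μ := hXint.1
  have hCm : AEStronglyMeasurable C μ := (hC.mono h𝒢).aestronglyMeasurable
  have hDm : AEStronglyMeasurable D μ := (hD.mono h𝒢).aestronglyMeasurable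
  have hAm : AEStronglyMeasurable A μ := (hA.mono h𝒢).aestronglyMeasurable
  have hB1am : AEStronglyMeasurable B1 μ := (hB1m.mono h𝒢).aestronglyMeasurable
  have hB2am : AEStronglyMeasurable B2 μ := (hB2m.mono h𝒢).aestronglyMeasurable
  set KE : ℝ := K * exp 2 with hKE_def
  -- the combined a.e. good event
  have hgood : ∀ᵐ ω ∂μ, (C ω < D ω) ∧ (C ω ≤ X ω ∧ X ω ≤ D ω) ∧ C ω ≤ 0 ∧ 0 ≤ D ω ∧
      A ω ≤ K * exp (-(t ^ 2 * (D ω - C ω) ^ 2 / 8)) := by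
    filter_upwards [hCD, hb, hC0, hD0, hAK] with ω h1 h2 h3 h4 h5
    exact ⟨h1, h2, h3, h4, h5⟩
  -- generic bound: A * exp (t*e) ≤ KE whenever t*e ≤ |t|*(D-C)
  have hgen : ∀ ω, C ω < D ω → A ω ≤ K * exp (-(t ^ 2 * (D ω - C ω) ^ 2 / 8)) →
      ∀ e : ℝ, t * e ≤ |t| * (D ω - C ω) → A ω * exp (t * e) ≤ KE := by
    intro ω h1 h5 e he
    calc A ω * exp (t * e) ≤ (K * exp (-(t ^ 2 * (D ω - C ω) ^ 2 / 8))) * exp (t * e) :=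
          mul_le_mul_of_nonneg_right h5 (exp_pos _).le
      _ = K * (exp (-(t ^ 2 * (D ω - C ω) ^ 2 / 8)) * exp (t * e)) := by ring
      _ ≤ K * exp 2 := mul_le_mul_of_nonneg_left (exp_bound_aux he) hK
  -- |X| ≤ D - C etc
  have habs : ∀ ω, C ω ≤ X ω → X ω ≤ D ω → C ω ≤ 0 → 0 ≤ D ω →
      t * X ω ≤ |t| * (D ω - C ω) := by
    intro ω h1 h2 h3 h4
    calc t * X ω ≤ |t * X ω| := le_abs_self _
      _ = |t| * |X ω| := abs_mul t (X ω)
      _ ≤ |t| * (D ω - C ω) := by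
          apply mul_le_mul_of_nonneg_left _ (abs_nonneg t)
          rw [abs_le]; constructor <;> linarith
  have habsC : ∀ ω, C ω < D ω → C ω ≤ 0 → 0 ≤ D ω → t * C ω ≤ |t| * (D ω - C ω) := by
    intro ω h1 h3 h4
    calc t * C ω ≤ |t * C ω| := le_abs_self _
      _ = |t| * |C ω| := abs_mul t (C ω)
      _ ≤ |t| * (D ω - C ω) := by
          apply mul_le_mul_of_nonneg_left _ (abs_nonneg t)
          rw [abs_le]; constructor <;> linarith
  have habsD : ∀ ω, C ω < D ω → C ω ≤ 0 → 0 ≤ D ω → t * D ω ≤ |t| * (D ω - C ω) := by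
    intro ω h1 h3 h4
    calc t * D ω ≤ |t * D ω| := le_abs_self _
      _ = |t| * |D ω| := abs_mul t (D ω)
      _ ≤ |t| * (D ω - C ω) := by
          apply mul_le_mul_of_nonneg_left _ (abs_nonneg t)
          rw [abs_le]; constructor <;> linarith
  -- scalar division bound helper
  have hscal : ∀ a e z Δ KE' : ℝ, 0 ≤ a → 0 < Δ → |z| ≤ Δ → a * Real.exp e ≤ KE' →
      |a * Real.exp e / Δ * z| ≤ KE' := by
    intro a e z Δ KE' ha hΔ hz hbnd
    have h1 : |a * Real.exp e / Δ * z| = a * Real.exp e / Δ * |z| := by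
      rw [abs_mul, abs_of_nonneg (by positivity)]
    rw [h1]
    calc a * Real.exp e / Δ * |z| ≤ a * Real.exp e / Δ * Δ :=
          mul_le_mul_of_nonneg_left hz (by positivity)
      _ = a * Real.exp e := div_mul_cancel₀ _ hΔ.ne'
      _ ≤ KE' := hbnd
  have hKE : (0:ℝ) ≤ KE := by positivity
  -- integrability of all the pieces
  have hbnd_int : ∀ F : Ω → ℝ, AEStronglyMeasurable F μ → (∀ᵐ ω ∂μ, |F ω| ≤ KE) →
      Integrable F μ := by
    intro F hFm hFb
    exact (integrable_const KE).mono' hFm (by filter_upwards [hFb] with ω h; simpa using h)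
  have hI0 : Integrable (fun ω => A ω * exp (t * X ω)) μ := by
    refine hbnd_int _ (hAm.mul (Real.measurable_exp.aestronglyMeasurable.comp_aemeasurable
      ((hXm.aemeasurable.const_mul t)))) ?_
    filter_upwards [hgood] with ω ⟨h1, h2, h3, h4, h5⟩
    rw [abs_of_nonneg (mul_nonneg (hA0 ω) (exp_pos _).le)]
    exact hgen ω h1 h5 _ (habs ω h2.1 h2.2 h3 h4)
  have hI1 : Integrable (fun ω => B1 ω * (D ω - X ω)) μ := by
    refine hbnd_int _ (hB1am.mul (hDm.sub hXm)) ?_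
    filter_upwards [hgood] with ω ⟨h1, h2, h3, h4, h5⟩
    exact hscal _ _ _ _ _ (hA0 ω) (sub_pos.mpr h1) (by rw [abs_le]; constructor <;> linarith)
      (hgen ω h1 h5 _ (habsC ω h1 h3 h4))
  have hI2 : Integrable (fun ω => B2 ω * (X ω - C ω)) μ := by
    refine hbnd_int _ (hB2am.mul (hXm.sub hCm)) ?_
    filter_upwards [hgood] with ω ⟨h1, h2, h3, h4, h5⟩
    exact hscal _ _ _ _ _ (hA0 ω) (sub_pos.mpr h1) (by rw [abs_le]; constructor <;> linarith)
      (hgen ω h1 h5 _ (habsD ω h1 h3 h4))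
  have hI3 : Integrable (fun ω => B1 ω * D ω) μ := by
    refine hbnd_int _ (hB1am.mul hDm) ?_
    filter_upwards [hgood] with ω ⟨h1, h2, h3, h4, h5⟩
    exact hscal _ _ _ _ _ (hA0 ω) (sub_pos.mpr h1) (by rw [abs_le]; constructor <;> linarith)
      (hgen ω h1 h5 _ (habsC ω h1 h3 h4))
  have hI4 : Integrable (B1 * X) μ := by
    refine hbnd_int _ (hB1am.mul hXm) ?_
    filter_upwards [hgood] with ω ⟨h1, h2, h3, h4, h5⟩
    exact hscal _ _ _ _ _ (hA0 ω) (sub_pos.mpr h1) (by rw [abs_le]; constructor <;> linarith)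
      (hgen ω h1 h5 _ (habsC ω h1 h3 h4))
  have hI5 : Integrable (fun ω => B2 ω * C ω) μ := by
    refine hbnd_int _ (hB2am.mul hCm) ?_
    filter_upwards [hgood] with ω ⟨h1, h2, h3, h4, h5⟩
    exact hscal _ _ _ _ _ (hA0 ω) (sub_pos.mpr h1) (by rw [abs_le]; constructor <;> linarith)
      (hgen ω h1 h5 _ (habsD ω h1 h3 h4))
  have hI6 : Integrable (B2 * X) μ := by
    refine hbnd_int _ (hB2am.mul hXm) ?_
    filter_upwards [hgood] with ω ⟨h1, h2, h3, h4, h5⟩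
    exact hscal _ _ _ _ _ (hA0 ω) (sub_pos.mpr h1) (by rw [abs_le]; constructor <;> linarith)
      (hgen ω h1 h5 _ (habsD ω h1 h3 h4))
  have hI7 : Integrable (fun ω => A ω * exp (t ^ 2 * (D ω - C ω) ^ 2 / 8)) μ := by
    have hmeas : AEStronglyMeasurable (fun ω => A ω * exp (t ^ 2 * (D ω - C ω) ^ 2 / 8)) μ := by
      refine ((hA.mono h𝒢).measurable.mul (Real.measurable_exp.comp ?_)).aestronglyMeasurable
      exact ((((hD.mono h𝒢).measurable.sub
        (hC.mono h𝒢).measurable).pow_const 2).const_mul (t ^ 2)).div_const 8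
    refine hbnd_int _ hmeas ?_
    filter_upwards [hgood] with ω ⟨h1, h2, h3, h4, h5⟩
    rw [abs_of_nonneg (mul_nonneg (hA0 ω) (exp_pos _).le)]
    calc A ω * exp (t ^ 2 * (D ω - C ω) ^ 2 / 8)
        ≤ K * exp (-(t ^ 2 * (D ω - C ω) ^ 2 / 8)) * exp (t ^ 2 * (D ω - C ω) ^ 2 / 8) :=
          mul_le_mul_of_nonneg_right h5 (exp_pos _).le
      _ = K := by rw [mul_assoc, ← exp_add]; simp
      _ ≤ KE := by
          rw [hKE_def]
          nlinarith [Real.one_le_exp (by norm_num : (0:ℝ) ≤ 2)]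
  -- pull-out: ∫ B • X = 0 for 𝒢-measurable B
  have hpull : ∀ B : Ω → ℝ, StronglyMeasurable[𝒢] B → Integrable (B * X) μ →
      ∫ ω, (B * X) ω ∂μ = 0 := by
    intro B hBm hint
    have h1 : μ[B * X|𝒢] =ᵐ[μ] B * μ[X|𝒢] := condExp_mul_of_stronglyMeasurable_left hBm hint hXint
    calc ∫ ω, (B * X) ω ∂μ = ∫ ω, (μ[B * X|𝒢]) ω ∂μ := (integral_condExp h𝒢).symm
      _ = ∫ ω, (B * μ[X|𝒢]) ω ∂μ := integral_congr_ae h1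
      _ = 0 := by
          have hz : (B * μ[X|𝒢]) =ᵐ[μ] 0 := by
            filter_upwards [hcond] with ω h
            simp only [Pi.mul_apply, Pi.zero_apply] at h ⊢
            rw [h, mul_zero]
          rw [integral_congr_ae hz]; simp
  have hP1 : ∫ ω, (B1 * X) ω ∂μ = 0 := hpull B1 hB1m hI4
  have hP2 : ∫ ω, (B2 * X) ω ∂μ = 0 := hpull B2 hB2m hI6
  -- convexity step
  have hmono1 : ∀ᵐ ω ∂μ, A ω * exp (t * X ω) ≤ B1 ω * (D ω - X ω) + B2 ω * (X ω - C ω) := by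
    filter_upwards [hgood] with ω ⟨h1, h2, h3, h4, h5⟩
    have hΔ : (0:ℝ) < D ω - C ω := sub_pos.mpr h1
    have hcv := mul_le_mul_of_nonneg_left (exp_convex_bound h2.1 h2.2 h1 t) (hA0 ω)
    refine hcv.trans (le_of_eq ?_)
    simp only [hB1_def, hB2_def]
    field_simp
  -- Hoeffding step
  have hmono2 : ∀ᵐ ω ∂μ, B1 ω * D ω - B2 ω * C ω ≤
      A ω * exp (t ^ 2 * (D ω - C ω) ^ 2 / 8) := by
    filter_upwards [hgood] with ω ⟨h1, h2, h3, h4, h5⟩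
    have hΔ : (0:ℝ) < D ω - C ω := sub_pos.mpr h1
    have hs := hoeffding_scalar h3 h4 h1 t
    have heq : B1 ω * D ω - B2 ω * C ω
        = A ω / (D ω - C ω) * (D ω * exp (t * C ω) - C ω * exp (t * D ω)) := by
      simp only [hB1_def, hB2_def]; field_simp
    rw [heq]
    calc A ω / (D ω - C ω) * (D ω * exp (t * C ω) - C ω * exp (t * D ω))
        ≤ A ω / (D ω - C ω) * ((D ω - C ω) * exp (t ^ 2 * (D ω - C ω) ^ 2 / 8)) :=
          mul_le_mul_of_nonneg_left hs (div_nonneg (hA0 ω) hΔ.le)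
      _ = A ω * exp (t ^ 2 * (D ω - C ω) ^ 2 / 8) := by field_simp <;> ring
  -- assemble
  calc ∫ ω, A ω * exp (t * X ω) ∂μ
      ≤ ∫ ω, (B1 ω * (D ω - X ω) + B2 ω * (X ω - C ω)) ∂μ :=
        integral_mono_ae hI0 (hI1.add hI2) hmono1
    _ = (∫ ω, B1 ω * (D ω - X ω) ∂μ) + ∫ ω, B2 ω * (X ω - C ω) ∂μ :=
        integral_add hI1 hI2
    _ = ((∫ ω, B1 ω * D ω ∂μ) - ∫ ω, (B1 * X) ω ∂μ)
        + ((∫ ω, (B2 * X) ω ∂μ) - ∫ ω, B2 ω * C ω ∂μ) := by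
        rw [← integral_sub hI3 hI4, ← integral_sub hI6 hI5]
        congr 1
        · exact integral_congr_ae (Filter.Eventually.of_forall fun ω => by
            simp [Pi.mul_apply]; ring)
        · exact integral_congr_ae (Filter.Eventually.of_forall fun ω => by
            simp [Pi.mul_apply]; ring)
    _ = ∫ ω, (B1 ω * D ω - B2 ω * C ω) ∂μ := by
        rw [hP1, hP2, integral_sub hI3 hI5]
        ring
    _ ≤ ∫ ω, A ω * exp (t ^ 2 * (D ω - C ω) ^ 2 / 8) ∂μ :=
        integral_mono_ae (hI3.sub hI5) hI7 hmono2

lemma gauss_integrable {a : ℝ} (ha : 0 < a) (c : ℝ) :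
    Integrable (fun t => exp (c * t - a * t ^ 2 / 2)) (volume : Measure ℝ) := by
  have hfun : ∀ t : ℝ, exp (c * t - a * t ^ 2 / 2)
      = exp (c ^ 2 / (2 * a)) * exp (-(a / 2) * (t - c / a) ^ 2) := by
    intro t
    rw [← exp_add]
    congr 1
    field_simp
    ring
  simp_rw [hfun]
  exact ((integrable_exp_neg_mul_sq (by linarith : (0:ℝ) < a / 2)).comp_sub_right
    (c / a)).const_mul _

lemma gauss_integral {a : ℝ} (ha : 0 < a) (c : ℝ) :
    ∫ t : ℝ, exp (c * t - a * t ^ 2 / 2)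
      = Real.sqrt (2 * π / a) * exp (c ^ 2 / (2 * a)) := by
  have hfun : ∀ t : ℝ, exp (c * t - a * t ^ 2 / 2)
      = exp (c ^ 2 / (2 * a)) * exp (-(a / 2) * (t - c / a) ^ 2) := by
    intro t
    rw [← exp_add]
    congr 1
    field_simp
    ring
  simp_rw [hfun]
  rw [integral_const_mul]
  rw [integral_sub_right_eq_self (fun t : ℝ => exp (-(a / 2) * t ^ 2)) (c / a)]
  rw [integral_gaussian]
  rw [mul_comm]
  congr 1
  field_simp

/-- `t*x - t²(d-c)²/8 ≤ 2` for `c ≤ x ≤ d`, `c ≤ 0 ≤ d`. -/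
lemma lin_two {t x c d : ℝ} (h1 : c ≤ x) (h2 : x ≤ d) (h3 : c ≤ 0) (h4 : 0 ≤ d) :
    t * x - t ^ 2 * (d - c) ^ 2 / 8 ≤ 2 := by
  have habs : t * x ≤ |t| * (d - c) := by
    calc t * x ≤ |t * x| := le_abs_self _
      _ = |t| * |x| := abs_mul t x
      _ ≤ |t| * (d - c) := by
          apply mul_le_mul_of_nonneg_left _ (abs_nonneg t)
          rw [abs_le]; constructor <;> linarith
  nlinarith [sq_nonneg (|t| * (d - c) - 4), sq_abs t]

/-- Self-normalized martingale concentration: in the martingale setup with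
predictable bounds `C_i ≤ X_i ≤ D_i`, writing `M_k = Σ_{i=1}^k X_i` and
`U_k² = Σ_{i=1}^k (D_i − C_i)²`, for every `k ≥ 1`, `β > 0` and `δ ∈ (0, 1/e]`,
`P(|M_k| ≥ √((U_k²/4 + β)(2 + log(U_k²/(4β) + 1)) log(1/δ))) ≤ δ`. -/
theorem self_normalized_martingale_concentration
    {Ω : Type*} {m : MeasurableSpace Ω} (μ : Measure Ω) [IsProbabilityMeasure μ]
    (k : ℕ) (hk : 1 ≤ k) (ℱ : Filtration ℕ m) (X C D : ℕ → Ω → ℝ)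
    (hXint : ∀ i, 1 ≤ i → i ≤ k → Integrable (X i) μ)
    (hXmeas : ∀ i, 1 ≤ i → i ≤ k → StronglyMeasurable[ℱ i] (X i))
    (hcond : ∀ i, 1 ≤ i → i ≤ k → μ[X i|ℱ (i - 1)] =ᵐ[μ] 0)
    (hCmeas : ∀ i, 1 ≤ i → i ≤ k → StronglyMeasurable[ℱ (i - 1)] (C i))
    (hDmeas : ∀ i, 1 ≤ i → i ≤ k → StronglyMeasurable[ℱ (i - 1)] (D i))
    (hCltD : ∀ i, 1 ≤ i → i ≤ k → ∀ᵐ ω ∂μ, C i ω < D i ω)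
    (hbounds : ∀ i, 1 ≤ i → i ≤ k → ∀ᵐ ω ∂μ, C i ω ≤ X i ω ∧ X i ω ≤ D i ω)
    (β δ : ℝ) (hβ : 0 < β) (hδ0 : 0 < δ) (hδ1 : δ ≤ (Real.exp 1)⁻¹) :
    μ {ω | Real.sqrt
        (((∑ i ∈ Finset.Icc 1 k, (D i ω - C i ω) ^ 2) / 4 + β) *
          (2 + Real.log ((∑ i ∈ Finset.Icc 1 k, (D i ω - C i ω) ^ 2) / (4 * β) + 1)) *
          Real.log (1 / δ)) ≤ |∑ i ∈ Finset.Icc 1 k, X i ω|} ≤ ENNReal.ofReal δ := by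
  classical
  have hπ : (0:ℝ) < π := Real.pi_pos
  -- combined a.e. event
  have hball : ∀ᵐ ω ∂μ, ∀ i, 1 ≤ i → i ≤ k →
      C i ω < D i ω ∧ (C i ω ≤ X i ω ∧ X i ω ≤ D i ω) ∧ C i ω ≤ 0 ∧ 0 ≤ D i ω := by
    rw [ae_all_iff]
    intro i
    by_cases h1 : 1 ≤ i
    · by_cases h2 : i ≤ k
      · have hC0 : ∀ᵐ ω ∂μ, C i ω ≤ 0 :=
          ae_nonpos_of_le_condexp_zero (ℱ.le (i-1)) (hXint i h1 h2) (hcond i h1 h2)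
            (hCmeas i h1 h2) ((hbounds i h1 h2).mono fun ω h => h.1)
        have hD0 : ∀ᵐ ω ∂μ, 0 ≤ D i ω := by
          have hcond' : μ[fun ω => -X i ω|ℱ (i-1)] =ᵐ[μ] 0 := by
            have := condExp_neg (μ := μ) (m := ℱ (i-1)) (X i)
            refine this.trans ?_
            filter_upwards [hcond i h1 h2] with ω h
            simp only [Pi.neg_apply, Pi.zero_apply] at h ⊢
            simp [h]
          have := ae_nonpos_of_le_condexp_zero (ℱ.le (i-1)) (hXint i h1 h2).neg hcond'
            (hDmeas i h1 h2).neg ((hbounds i h1 h2).mono fun ω h => neg_le_neg h.2)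
          filter_upwards [this] with ω h
          simpa using h
        filter_upwards [hCltD i h1 h2, hbounds i h1 h2, hC0, hD0] with ω g1 g2 g3 g4 _ _
        exact ⟨g1, g2, g3, g4⟩
      · filter_upwards with ω _ hh; exact absurd hh h2
    · filter_upwards with ω hh; exact absurd hh h1
  -- supermartingale property by induction
  have key : ∀ t : ℝ, ∀ n, n ≤ k → ∫ ω, exp (t * (∑ i ∈ Finset.Icc 1 n, X i ω)
      - t ^ 2 * (∑ i ∈ Finset.Icc 1 n, (D i ω - C i ω) ^ 2) / 8) ∂μ ≤ 1 := by
    intro t n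
    induction n with
    | zero =>
      intro _
      have he : Finset.Icc 1 0 = (∅ : Finset ℕ) := Finset.Icc_eq_empty (by omega)
      simp [he]
    | succ n ih =>
      intro hsk
      have hn : n ≤ k := le_trans (Nat.le_succ n) hsk
      have h1n : 1 ≤ n + 1 := by omega
      set A : Ω → ℝ := fun ω => exp (t * (∑ i ∈ Finset.Icc 1 n, X i ω)
        - t ^ 2 * (∑ i ∈ Finset.Icc 1 (n+1), (D i ω - C i ω) ^ 2) / 8) with hA_def
      have hSm : Measurable[ℱ n] (fun ω => ∑ i ∈ Finset.Icc 1 n, X i ω) := by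
        refine Finset.measurable_sum _ (fun i hi => ?_)
        obtain ⟨hi1, hi2⟩ := Finset.mem_Icc.mp hi
        exact ((hXmeas i hi1 (hi2.trans hn)).mono (ℱ.mono hi2)).measurable
      have hTm : Measurable[ℱ n] (fun ω => ∑ i ∈ Finset.Icc 1 (n+1), (D i ω - C i ω) ^ 2) := by
        refine Finset.measurable_sum _ (fun i hi => ?_)
        obtain ⟨hi1, hi2⟩ := Finset.mem_Icc.mp hi
        have hle : ℱ (i - 1) ≤ ℱ n := ℱ.mono (by omega)
        exact ((((hDmeas i hi1 (hi2.trans hsk)).mono hle).sub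
          ((hCmeas i hi1 (hi2.trans hsk)).mono hle)).measurable).pow_const 2
      have hA_SM : StronglyMeasurable[ℱ n] A := by
        refine Measurable.stronglyMeasurable ?_
        exact Real.measurable_exp.comp ((hSm.const_mul t).sub
          ((hTm.const_mul (t ^ 2)).div_const 8))
      have hAK : ∀ᵐ ω ∂μ, A ω ≤ exp (2 * n)
          * exp (-(t ^ 2 * (D (n+1) ω - C (n+1) ω) ^ 2 / 8)) := by
        filter_upwards [hball] with ω hω
        have hsum : t * (∑ i ∈ Finset.Icc 1 n, X i ω)
            - t ^ 2 * (∑ i ∈ Finset.Icc 1 n, (D i ω - C i ω) ^ 2) / 8 ≤ 2 * n := by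
          have heq : t * (∑ i ∈ Finset.Icc 1 n, X i ω)
              - t ^ 2 * (∑ i ∈ Finset.Icc 1 n, (D i ω - C i ω) ^ 2) / 8
              = ∑ i ∈ Finset.Icc 1 n, (t * X i ω - t ^ 2 * (D i ω - C i ω) ^ 2 / 8) := by
            rw [Finset.sum_sub_distrib]
            congr 1
            · exact Finset.mul_sum _ _ _
            · rw [Finset.mul_sum, Finset.sum_div]
          rw [heq]
          calc ∑ i ∈ Finset.Icc 1 n, (t * X i ω - t ^ 2 * (D i ω - C i ω) ^ 2 / 8)
              ≤ ∑ i ∈ Finset.Icc 1 n, (2:ℝ) := by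
                refine Finset.sum_le_sum (fun i hi => ?_)
                obtain ⟨hi1, hi2⟩ := Finset.mem_Icc.mp hi
                obtain ⟨g1, g2, g3, g4⟩ := hω i hi1 (hi2.trans hn)
                exact lin_two g2.1 g2.2 g3 g4
            _ = 2 * n := by
                rw [Finset.sum_const, Nat.card_Icc]
                simp [mul_comm]
        have hsplit : A ω = exp (t * (∑ i ∈ Finset.Icc 1 n, X i ω)
            - t ^ 2 * (∑ i ∈ Finset.Icc 1 n, (D i ω - C i ω) ^ 2) / 8)
            * exp (-(t ^ 2 * (D (n+1) ω - C (n+1) ω) ^ 2 / 8)) := by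
          simp only [hA_def]
          rw [← exp_add]
          congr 1
          rw [Finset.sum_Icc_succ_top h1n (fun i => (D i ω - C i ω) ^ 2)]
          ring
        rw [hsplit]
        exact mul_le_mul_of_nonneg_right (exp_le_exp.mpr hsum) (exp_pos _).le
      have hcond' : μ[X (n+1)|ℱ n] =ᵐ[μ] 0 := hcond (n+1) h1n hsk
      have hsb := step_bound μ (ℱ.le n) t (exp (2 * n)) (exp_pos _).le
        (hXint (n+1) h1n hsk) hcond' (hCmeas (n+1) h1n hsk) (hDmeas (n+1) h1n hsk)
        (hCltD (n+1) h1n hsk) (hbounds (n+1) h1n hsk) hA_SM (fun ω => (exp_pos _).le) hAK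
      have hgoal_eq : (fun ω => exp (t * (∑ i ∈ Finset.Icc 1 (n+1), X i ω)
          - t ^ 2 * (∑ i ∈ Finset.Icc 1 (n+1), (D i ω - C i ω) ^ 2) / 8))
          = fun ω => A ω * exp (t * X (n+1) ω) := by
        funext ω
        simp only [hA_def]
        rw [← exp_add]
        congr 1
        rw [Finset.sum_Icc_succ_top h1n (fun i => X i ω)]
        ring
      have hRHS_eq : (fun ω => A ω * exp (t ^ 2 * (D (n+1) ω - C (n+1) ω) ^ 2 / 8))
          = fun ω => exp (t * (∑ i ∈ Finset.Icc 1 n, X i ω)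
            - t ^ 2 * (∑ i ∈ Finset.Icc 1 n, (D i ω - C i ω) ^ 2) / 8) := by
        funext ω
        simp only [hA_def]
        rw [← exp_add]
        congr 1
        rw [Finset.sum_Icc_succ_top h1n (fun i => (D i ω - C i ω) ^ 2)]
        ring
      calc ∫ ω, exp (t * (∑ i ∈ Finset.Icc 1 (n+1), X i ω)
            - t ^ 2 * (∑ i ∈ Finset.Icc 1 (n+1), (D i ω - C i ω) ^ 2) / 8) ∂μ
          = ∫ ω, A ω * exp (t * X (n+1) ω) ∂μ := by rw [hgoal_eq]
        _ ≤ ∫ ω, A ω * exp (t ^ 2 * (D (n+1) ω - C (n+1) ω) ^ 2 / 8) ∂μ := hsb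
        _ = ∫ ω, exp (t * (∑ i ∈ Finset.Icc 1 n, X i ω)
            - t ^ 2 * (∑ i ∈ Finset.Icc 1 n, (D i ω - C i ω) ^ 2) / 8) ∂μ := by rw [hRHS_eq]
        _ ≤ 1 := ih hn
  -- abbreviations
  set U2 : Ω → ℝ := fun ω => ∑ i ∈ Finset.Icc 1 k, (D i ω - C i ω) ^ 2 with hU2_def
  set MK : Ω → ℝ := fun ω => ∑ i ∈ Finset.Icc 1 k, X i ω with hMK_def
  set L : ℝ := Real.log (1 / δ) with hL_def
  have hL1 : 1 ≤ L := by
    rw [hL_def, one_div, Real.log_inv]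
    have h := Real.log_le_log hδ0 hδ1
    rw [Real.log_inv, Real.log_exp] at h
    linarith
  have hU2_nonneg : ∀ ω, 0 ≤ U2 ω := fun ω => Finset.sum_nonneg fun i _ => sq_nonneg _
  have hMKm : Measurable MK := by
    refine Finset.measurable_sum _ (fun i hi => ?_)
    obtain ⟨hi1, hi2⟩ := Finset.mem_Icc.mp hi
    exact ((hXmeas i hi1 hi2).mono (ℱ.le i)).measurable
  have hU2m : Measurable U2 := by
    refine Finset.measurable_sum _ (fun i hi => ?_)
    obtain ⟨hi1, hi2⟩ := Finset.mem_Icc.mp hi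
    exact ((((hDmeas i hi1 hi2).mono (ℱ.le _)).sub
      ((hCmeas i hi1 hi2).mono (ℱ.le _))).measurable).pow_const 2
  have keyk : ∀ t : ℝ, ∫ ω, exp (t * MK ω - t ^ 2 * U2 ω / 8) ∂μ ≤ 1 := fun t => key t k le_rfl
  -- a.e. boundedness of the exponential
  have hsum_bound : ∀ t : ℝ, ∀ᵐ ω ∂μ, t * MK ω - t ^ 2 * U2 ω / 8 ≤ 2 * k := by
    intro t
    filter_upwards [hball] with ω hω
    have heq : t * MK ω - t ^ 2 * U2 ω / 8
        = ∑ i ∈ Finset.Icc 1 k, (t * X i ω - t ^ 2 * (D i ω - C i ω) ^ 2 / 8) := by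
      rw [hMK_def, hU2_def, Finset.sum_sub_distrib]
      congr 1
      · exact Finset.mul_sum _ _ _
      · rw [Finset.mul_sum, Finset.sum_div]
    rw [heq]
    calc ∑ i ∈ Finset.Icc 1 k, (t * X i ω - t ^ 2 * (D i ω - C i ω) ^ 2 / 8)
        ≤ ∑ i ∈ Finset.Icc 1 k, (2:ℝ) := by
          refine Finset.sum_le_sum (fun i hi => ?_)
          obtain ⟨hi1, hi2⟩ := Finset.mem_Icc.mp hi
          obtain ⟨g1, g2, g3, g4⟩ := hω i hi1 hi2
          exact lin_two g2.1 g2.2 g3 g4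
      _ = 2 * k := by
          rw [Finset.sum_const, Nat.card_Icc]
          simp [mul_comm]
  have hint_t : ∀ t : ℝ, Integrable (fun ω => exp (t * MK ω - t ^ 2 * U2 ω / 8)) μ := by
    intro t
    refine (integrable_const (exp (2 * k))).mono' ?_ ?_
    · exact (Real.measurable_exp.comp ((hMKm.const_mul t).sub
        ((hU2m.const_mul (t ^ 2)).div_const 8))).aestronglyMeasurable
    · filter_upwards [hsum_bound t] with ω hω
      rw [Real.norm_eq_abs, abs_of_nonneg (exp_pos _).le]
      exact exp_le_exp.mpr hω
  have h3a : ∀ t : ℝ, ∫⁻ ω, ENNReal.ofReal (exp (t * MK ω - t ^ 2 * U2 ω / 8)) ∂μ ≤ 1 := by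
    intro t
    rw [← ofReal_integral_eq_lintegral_ofReal (hint_t t)
      (Filter.Eventually.of_forall fun ω => (exp_pos _).le)]
    exact ENNReal.ofReal_le_one.mpr (keyk t)
  -- the Gaussian weight
  set w : ℝ → ℝ := fun t => Real.sqrt (β / (2 * π)) * exp (0 * t - β * t ^ 2 / 2) with hw_def
  have hw_nonneg : ∀ t, 0 ≤ w t := fun t => by
    simp only [hw_def]; positivity
  have hw_meas : Measurable w := by
    refine measurable_const.mul (Real.measurable_exp.comp ?_)
    exact ((measurable_id.const_mul (0:ℝ)).sub
      (((measurable_id.pow_const 2).const_mul β).div_const 2))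
  have hw_int : Integrable w volume := (gauss_integrable hβ 0).const_mul _
  have hw_total : ∫⁻ t, ENNReal.ofReal (w t) = 1 := by
    rw [← ofReal_integral_eq_lintegral_ofReal hw_int (Filter.Eventually.of_forall hw_nonneg)]
    have hint : ∫ t, w t = 1 := by
      simp only [hw_def]
      rw [integral_const_mul, gauss_integral hβ 0]
      rw [← mul_assoc, ← Real.sqrt_mul (by positivity)]
      rw [show β / (2 * π) * (2 * π / β) = 1 by field_simp]
      simp
    rw [hint, ENNReal.ofReal_one]
  -- joint measurability
  have hFm : Measurable (Function.uncurry
      (fun ω (t : ℝ) => ENNReal.ofReal (w t * exp (t * MK ω - t ^ 2 * U2 ω / 8)))) := by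
    exact ((hw_meas.comp measurable_snd).mul (Real.measurable_exp.comp
      ((measurable_snd.mul (hMKm.comp measurable_fst)).sub
      (((measurable_snd.pow_const 2).mul (hU2m.comp measurable_fst)).div_const 8)))).ennreal_ofReal
  have hexp_meas : ∀ t : ℝ, Measurable (fun ω => ENNReal.ofReal
      (exp (t * MK ω - t ^ 2 * U2 ω / 8))) := by
    intro t
    exact (Real.measurable_exp.comp ((hMKm.const_mul t).sub
      ((hU2m.const_mul (t ^ 2)).div_const 8))).ennreal_ofReal
  -- Tonelli
  have hswap : ∫⁻ ω, (∫⁻ t, ENNReal.ofReal (w t * exp (t * MK ω - t ^ 2 * U2 ω / 8))) ∂μ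
      ≤ 1 := by
    rw [lintegral_lintegral_swap hFm.aemeasurable]
    calc ∫⁻ t, ∫⁻ ω, ENNReal.ofReal (w t * exp (t * MK ω - t ^ 2 * U2 ω / 8)) ∂μ
        ≤ ∫⁻ t, ENNReal.ofReal (w t) := by
          refine lintegral_mono fun t => ?_
          calc ∫⁻ ω, ENNReal.ofReal (w t * exp (t * MK ω - t ^ 2 * U2 ω / 8)) ∂μ
              = ENNReal.ofReal (w t)
                * ∫⁻ ω, ENNReal.ofReal (exp (t * MK ω - t ^ 2 * U2 ω / 8)) ∂μ := by
                simp_rw [ENNReal.ofReal_mul (hw_nonneg t)]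
                exact lintegral_const_mul _ (hexp_meas t)
            _ ≤ ENNReal.ofReal (w t) * 1 := by gcongr; exact h3a t
            _ = ENNReal.ofReal (w t) := mul_one _
      _ = 1 := hw_total
  -- inner integral
  have hinner : ∀ ω, (∫⁻ t, ENNReal.ofReal (w t * exp (t * MK ω - t ^ 2 * U2 ω / 8)))
      = ENNReal.ofReal (Real.sqrt (β / (U2 ω / 4 + β))
          * exp (MK ω ^ 2 / (2 * (U2 ω / 4 + β)))) := by
    intro ω
    have ha : 0 < U2 ω / 4 + β := by have := hU2_nonneg ω; linarith
    have heq : ∀ t : ℝ, w t * exp (t * MK ω - t ^ 2 * U2 ω / 8)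
        = Real.sqrt (β / (2 * π)) * exp (MK ω * t - (U2 ω / 4 + β) * t ^ 2 / 2) := by
      intro t
      simp only [hw_def]
      rw [mul_assoc, ← exp_add]
      congr 2
      ring
    simp_rw [heq]
    rw [← ofReal_integral_eq_lintegral_ofReal ((gauss_integrable ha (MK ω)).const_mul _)
      (Filter.Eventually.of_forall fun t =>
        mul_nonneg (Real.sqrt_nonneg _) (exp_pos _).le)]
    rw [integral_const_mul, gauss_integral ha (MK ω)]
    congr 1
    rw [← mul_assoc]
    congr 1
    rw [← Real.sqrt_mul (by positivity)]
    congr 1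
    field_simp
  have hY : ∫⁻ ω, ENNReal.ofReal (Real.sqrt (β / (U2 ω / 4 + β))
      * exp (MK ω ^ 2 / (2 * (U2 ω / 4 + β)))) ∂μ ≤ 1 := by
    calc ∫⁻ ω, ENNReal.ofReal (Real.sqrt (β / (U2 ω / 4 + β))
          * exp (MK ω ^ 2 / (2 * (U2 ω / 4 + β)))) ∂μ
        = ∫⁻ ω, (∫⁻ t, ENNReal.ofReal (w t * exp (t * MK ω - t ^ 2 * U2 ω / 8))) ∂μ :=
          lintegral_congr fun ω => (hinner ω).symm
      _ ≤ 1 := hswap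
  -- Markov
  have hYmeas : AEMeasurable (fun ω => ENNReal.ofReal (Real.sqrt (β / (U2 ω / 4 + β))
      * exp (MK ω ^ 2 / (2 * (U2 ω / 4 + β))))) μ := by
    apply Measurable.aemeasurable
    apply Measurable.ennreal_ofReal
    refine Measurable.mul ?_ (Real.measurable_exp.comp ?_)
    · exact Real.continuous_sqrt.measurable.comp
        (measurable_const.div ((hU2m.div_const 4).add_const β))
    · exact (hMKm.pow_const 2).div (((hU2m.div_const 4).add_const β).const_mul 2)
  have hsubset : {ω | Real.sqrt ((U2 ω / 4 + β)
        * (2 + Real.log (U2 ω / (4 * β) + 1)) * L) ≤ |MK ω|}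
      ⊆ {ω | ENNReal.ofReal (1 / δ) ≤ ENNReal.ofReal (Real.sqrt (β / (U2 ω / 4 + β))
          * exp (MK ω ^ 2 / (2 * (U2 ω / 4 + β)))) } := by
    intro ω hω
    simp only [Set.mem_setOf_eq] at hω ⊢
    apply ENNReal.ofReal_le_ofReal
    have ha : 0 < U2 ω / 4 + β := by have := hU2_nonneg ω; linarith
    have hratio : U2 ω / (4 * β) + 1 = (U2 ω / 4 + β) / β := by field_simp
    have hlog0 : 0 ≤ Real.log ((U2 ω / 4 + β) / β) := by
      rw [← hratio]
      apply Real.log_nonneg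
      have : 0 ≤ U2 ω / (4 * β) := div_nonneg (hU2_nonneg ω) (by positivity)
      linarith
    have hT0 : 0 ≤ (U2 ω / 4 + β) * (2 + Real.log (U2 ω / (4 * β) + 1)) * L := by
      rw [hratio]
      have h2 : 0 ≤ 2 + Real.log ((U2 ω / 4 + β) / β) := by linarith
      exact mul_nonneg (mul_nonneg ha.le h2) (by linarith)
    have hM2 : (U2 ω / 4 + β) * (2 + Real.log (U2 ω / (4 * β) + 1)) * L ≤ MK ω ^ 2 := by
      calc (U2 ω / 4 + β) * (2 + Real.log (U2 ω / (4 * β) + 1)) * L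
          = Real.sqrt ((U2 ω / 4 + β) * (2 + Real.log (U2 ω / (4 * β) + 1)) * L) ^ 2 :=
            (Real.sq_sqrt hT0).symm
        _ ≤ |MK ω| ^ 2 := pow_le_pow_left₀ (Real.sqrt_nonneg _) hω 2
        _ = MK ω ^ 2 := sq_abs _
    have hexp_ge : L + Real.log ((U2 ω / 4 + β) / β) / 2
        ≤ MK ω ^ 2 / (2 * (U2 ω / 4 + β)) := by
      have h2 : (U2 ω / 4 + β) * (2 + Real.log (U2 ω / (4 * β) + 1)) * L
            / (2 * (U2 ω / 4 + β))
          ≤ MK ω ^ 2 / (2 * (U2 ω / 4 + β)) := by gcongr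
      have h3 : (U2 ω / 4 + β) * (2 + Real.log (U2 ω / (4 * β) + 1)) * L
            / (2 * (U2 ω / 4 + β))
          = (2 + Real.log ((U2 ω / 4 + β) / β)) * L / 2 := by
        rw [hratio, mul_assoc, mul_comm 2 (U2 ω / 4 + β), mul_div_mul_left _ _ ha.ne']
      have h4 : L + Real.log ((U2 ω / 4 + β) / β) / 2
          ≤ (2 + Real.log ((U2 ω / 4 + β) / β)) * L / 2 := by nlinarith
      linarith
    have hsq : exp (Real.log ((U2 ω / 4 + β) / β) / 2)
        = Real.sqrt ((U2 ω / 4 + β) / β) := by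
      rw [← Real.log_sqrt (div_nonneg ha.le hβ.le)]
      exact Real.exp_log (Real.sqrt_pos.mpr (div_pos ha hβ))
    have hprod : Real.sqrt (β / (U2 ω / 4 + β)) * Real.sqrt ((U2 ω / 4 + β) / β) = 1 := by
      rw [← Real.sqrt_mul (div_nonneg hβ.le ha.le)]
      have hval : β / (U2 ω / 4 + β) * ((U2 ω / 4 + β) / β) = 1 := by
        rw [div_mul_div_comm, mul_comm β (U2 ω / 4 + β)]
        exact div_self (mul_ne_zero ha.ne' hβ.ne')
      rw [hval]
      exact Real.sqrt_one
    calc 1 / δ = exp L := by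
          rw [hL_def]
          exact (Real.exp_log (by positivity)).symm
      _ = exp L * (Real.sqrt (β / (U2 ω / 4 + β)) * Real.sqrt ((U2 ω / 4 + β) / β)) := by
          rw [hprod, mul_one]
      _ = Real.sqrt (β / (U2 ω / 4 + β)) * exp (L + Real.log ((U2 ω / 4 + β) / β) / 2) := by
          rw [exp_add, hsq]; ring
      _ ≤ Real.sqrt (β / (U2 ω / 4 + β)) * exp (MK ω ^ 2 / (2 * (U2 ω / 4 + β))) :=
          mul_le_mul_of_nonneg_left (exp_le_exp.mpr hexp_ge) (Real.sqrt_nonneg _)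
  have hmarkov := mul_meas_ge_le_lintegral₀ hYmeas (ENNReal.ofReal (1 / δ))
  have h2 : ENNReal.ofReal (1 / δ) * μ {ω | ENNReal.ofReal (1 / δ)
      ≤ ENNReal.ofReal (Real.sqrt (β / (U2 ω / 4 + β))
        * exp (MK ω ^ 2 / (2 * (U2 ω / 4 + β))))} ≤ 1 := hmarkov.trans hY
  have hc0 : ENNReal.ofReal (1 / δ) ≠ 0 := by
    simp only [ne_eq, ENNReal.ofReal_eq_zero, not_le]
    positivity
  have h3 : μ {ω | ENNReal.ofReal (1 / δ) ≤ ENNReal.ofReal (Real.sqrt (β / (U2 ω / 4 + β))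
      * exp (MK ω ^ 2 / (2 * (U2 ω / 4 + β))))} ≤ ENNReal.ofReal δ := by
    rw [mul_comm] at h2
    have h4 := (ENNReal.le_div_iff_mul_le (Or.inl hc0)
      (Or.inl ENNReal.ofReal_ne_top)).mpr h2
    rw [one_div (ENNReal.ofReal (1 / δ)),
      ← ENNReal.ofReal_inv_of_pos (by positivity : (0:ℝ) < 1 / δ),
      one_div δ, inv_inv] at h4
    simpa [one_div] using h4
  exact (measure_mono hsubset).trans h3
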